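/- arXiv:2005.06158 — 3 statements merged into one kernel-verified Lean document; each statement's English description precedes it below -/
import Mathlib

section
/- Let f_R = ∑_{r_1,...,r_K ∈ {0,...,R}, ∑ r_k = RT} ∏_{k=1}^K C(R, r_k) exp(∑_k r_k a_k), where 0 < T < K is an integer. Then lim_{R→∞} (1/R) log f_R = −τT + ∑_{k=1}^K log(1 + exp(a_k + τ)), where τ is the unique real solution of ∑_{k=1}^K exp(a_k + τ)/(1 + exp(a_k + τ)) = T. -/
open Finset Filter Real Topology


private lemma step_eq (n k j : ℕ) (hj : j < n) :
    n.choose (j+1) * k^(j+1) * (n-k)^(n-(j+1)) * ((j+1)*(n-k))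
      = n.choose j * k^j * (n-k)^(n-j) * ((n-j)*k) := by
  have h1 : (n-k)^(n-(j+1)) * (n-k) = (n-k)^(n-j) := by
    rw [← pow_succ]; congr 1; omega
  calc n.choose (j+1) * k^(j+1) * (n-k)^(n-(j+1)) * ((j+1)*(n-k))
      = (n.choose (j+1) * (j+1)) * (k^(j+1)) * ((n-k)^(n-(j+1)) * (n-k)) := by ring
    _ = (n.choose j * (n-j)) * (k^j * k) * (n-k)^(n-j) := by
        rw [Nat.choose_succ_right_eq, h1, pow_succ]
    _ = n.choose j * k^j * (n-k)^(n-j) * ((n-j)*k) := by ring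

private lemma mode_le (n k : ℕ) (hkn : k < n) (j : ℕ) :
    n.choose j * k^j * (n-k)^(n-j) ≤ n.choose k * k^k * (n-k)^(n-k) := by
  set t : ℕ → ℕ := fun j => n.choose j * k^j * (n-k)^(n-j) with ht
  have hXpos : ∀ i : ℕ, 0 < (i+1)*(n-k) := fun i => Nat.mul_pos (Nat.succ_pos _) (by omega)
  have hup : ∀ i, i < k → t i ≤ t (i+1) := by
    intro i hik
    have heq := step_eq n k i (hik.trans hkn)
    have hle : (i+1)*(n-k) ≤ (n-i)*k := by
      rw [mul_comm (n-i) k]; exact Nat.mul_le_mul (by omega) (by omega)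
    have h2 : t i * ((i+1)*(n-k)) ≤ t i * ((n-i)*k) := Nat.mul_le_mul_left _ hle
    rw [← heq] at h2
    exact Nat.le_of_mul_le_mul_right h2 (hXpos i)
  have hdn : ∀ i, k ≤ i → t (i+1) ≤ t i := by
    intro i hki
    by_cases hin : i < n
    · have heq := step_eq n k i hin
      have hle : (n-i)*k ≤ (i+1)*(n-k) := by
        rw [mul_comm (i+1) (n-k)]; exact Nat.mul_le_mul (by omega) (by omega)
      have h2 : t (i+1) * ((i+1)*(n-k)) ≤ t i * ((i+1)*(n-k)) := by
        rw [heq]; exact Nat.mul_le_mul_left _ hle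
      exact Nat.le_of_mul_le_mul_right h2 (hXpos i)
    · have : n.choose (i+1) = 0 := Nat.choose_eq_zero_of_lt (by omega)
      simp [ht, this]
  have hup' : ∀ d, t (k - d) ≤ t k := by
    intro d
    induction d with
    | zero => simp
    | succ d ih =>
      by_cases hd : d < k
      · have h1 := hup (k-(d+1)) (by omega)
        have h2 : k-(d+1)+1 = k-d := by omega
        rw [h2] at h1
        exact h1.trans ih
      · have h2 : k - (d+1) = k - d := by omega
        rw [h2]; exact ih
  have hdn' : ∀ d, t (k + d) ≤ t k := by
    intro d
    induction d with
    | zero => simp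
    | succ d ih => exact (hdn (k+d) (by omega)).trans ih
  rcases le_or_gt j k with h | h
  · have := hup' (k - j)
    rwa [show k - (k - j) = j by omega] at this
  · have := hdn' (j - k)
    rwa [show k + (j - k) = j by omega] at this

private lemma pow_le_choose (n k : ℕ) (hkn : k < n) :
    n^n ≤ (n+1) * (n.choose k * k^k * (n-k)^(n-k)) := by
  have hbin : (k + (n-k))^n = ∑ m ∈ range (n+1), k^m * (n-k)^(n-m) * n.choose m :=
    add_pow k (n-k) n
  rw [show k + (n-k) = n by omega] at hbin
  rw [hbin]
  have hle : ∀ m ∈ range (n+1), k^m * (n-k)^(n-m) * n.choose m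
      ≤ n.choose k * k^k * (n-k)^(n-k) := by
    intro m _
    calc k^m * (n-k)^(n-m) * n.choose m = n.choose m * k^m * (n-k)^(n-m) := by ring
      _ ≤ _ := mode_le n k hkn m
  calc ∑ m ∈ range (n+1), k^m * (n-k)^(n-m) * n.choose m
      ≤ (range (n+1)).card • (n.choose k * k^k * (n-k)^(n-k)) :=
        Finset.sum_le_card_nsmul _ _ _ hle
    _ = (n+1) * (n.choose k * k^k * (n-k)^(n-k)) := by
        rw [Finset.card_range, smul_eq_mul]

private lemma log_choose_ge (n k : ℕ) (hk0 : 0 < k) (hkn : k < n) :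
    (n:ℝ) * Real.log n - k * Real.log k - ((n:ℝ) - k) * Real.log ((n:ℝ) - k)
      - Real.log (n+1) ≤ Real.log (n.choose k) := by
  have hcast : ((n:ℝ))^n ≤ ((n:ℝ)+1) * ((n.choose k : ℝ) * (k:ℝ)^k * ((n:ℝ)-(k:ℝ))^(n-k)) := by
    have := pow_le_choose n k hkn
    have h2 : ((n-k : ℕ) : ℝ) = (n:ℝ) - k := by
      rw [Nat.cast_sub hkn.le]
    calc ((n:ℝ))^n = ((n^n : ℕ) : ℝ) := by push_cast; ring
      _ ≤ (((n+1) * (n.choose k * k^k * (n-k)^(n-k)) : ℕ) : ℝ) := by exact_mod_cast this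
      _ = ((n:ℝ)+1) * ((n.choose k : ℝ) * (k:ℝ)^k * ((n:ℝ)-(k:ℝ))^(n-k)) := by
          push_cast [h2]; ring
  have hn0 : (0:ℝ) < n := by exact_mod_cast hk0.trans hkn
  have hlog := Real.log_le_log (by positivity) hcast
  rw [Real.log_pow] at hlog
  have hC : (0:ℝ) < (n.choose k : ℝ) := by
    exact_mod_cast Nat.choose_pos hkn.le
  have hk0' : (0:ℝ) < (k:ℝ) := by exact_mod_cast hk0
  have hnk0 : (0:ℝ) < (n:ℝ) - k := by
    have : (k:ℝ) < n := by exact_mod_cast hkn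
    linarith
  rw [Real.log_mul (by positivity) (by positivity),
      Real.log_mul (by positivity) (by positivity),
      Real.log_mul (by positivity) (by positivity),
      Real.log_pow, Real.log_pow] at hlog
  have hnkcast : ((n-k : ℕ) : ℝ) = (n:ℝ) - k := by rw [Nat.cast_sub hkn.le]
  rw [hnkcast] at hlog
  have : ((n:ℝ)) * Real.log n ≤ Real.log ((n:ℝ)+1) + (Real.log (n.choose k)
      + (k:ℝ) * Real.log k + ((n:ℝ)-k) * Real.log ((n:ℝ)-k)) := by linarith
  linarith


private noncomputable def qe {K : ℕ} (q : Fin K → ℝ) : ℕ → ℝ :=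
  fun j => if h : j < K then q ⟨j, h⟩ else 0

private noncomputable def FF {K : ℕ} (q : Fin K → ℝ) (R n : ℕ) : ℕ :=
  ⌊(R:ℝ) * ∑ j ∈ Finset.range n, qe q j⌋₊

private noncomputable def rr {K : ℕ} (q : Fin K → ℝ) (R : ℕ) (k : Fin K) : ℕ :=
  FF q R (k.val + 1) - FF q R k.val

section roundlem

variable {K : ℕ}

private lemma qe_nonneg (q : Fin K → ℝ) (hq0 : ∀ k, 0 ≤ q k) (j : ℕ) : 0 ≤ qe q j := by
  unfold qe
  split
  · exact hq0 _
  · exact le_refl 0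

private lemma S_nonneg (q : Fin K → ℝ) (hq0 : ∀ k, 0 ≤ q k) (n : ℕ) :
    0 ≤ ∑ j ∈ Finset.range n, qe q j :=
  Finset.sum_nonneg fun j _ => qe_nonneg q hq0 j

private lemma FF_mono (q : Fin K → ℝ) (hq0 : ∀ k, 0 ≤ q k) (R : ℕ) : Monotone (FF q R) := by
  intro m n hmn
  apply Nat.floor_mono
  apply mul_le_mul_of_nonneg_left _ (by positivity)
  exact Finset.sum_le_sum_of_subset_of_nonneg (Finset.range_subset_range.2 hmn)
    (fun j _ _ => qe_nonneg q hq0 j)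

private lemma rr_cast (q : Fin K → ℝ) (hq0 : ∀ k, 0 ≤ q k) (R : ℕ) (k : Fin K) :
    (rr q R k : ℝ) = (FF q R (k.val+1) : ℝ) - (FF q R k.val : ℝ) := by
  unfold rr
  rw [Nat.cast_sub (FF_mono q hq0 R (Nat.le_succ _))]

private lemma S_succ (q : Fin K → ℝ) (k : Fin K) :
    ∑ j ∈ Finset.range (k.val+1), qe q j = (∑ j ∈ Finset.range k.val, qe q j) + q k := by
  rw [Finset.sum_range_succ]
  congr 1
  unfold qe
  rw [dif_pos k.isLt]

private lemma rr_ub (q : Fin K → ℝ) (hq0 : ∀ k, 0 ≤ q k) (R : ℕ) (k : Fin K) :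
    (rr q R k : ℝ) ≤ (R:ℝ) * q k + 1 := by
  rw [rr_cast q hq0]
  have h1 : (FF q R (k.val+1) : ℝ) ≤ (R:ℝ) * ∑ j ∈ Finset.range (k.val+1), qe q j :=
    Nat.floor_le (mul_nonneg (by positivity) (S_nonneg q hq0 _))
  have h2 : (R:ℝ) * ∑ j ∈ Finset.range k.val, qe q j < (FF q R k.val : ℝ) + 1 :=
    Nat.lt_floor_add_one _
  have h3 := S_succ q k
  nlinarith [h3]

private lemma rr_lb (q : Fin K → ℝ) (hq0 : ∀ k, 0 ≤ q k) (R : ℕ) (k : Fin K) :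
    (R:ℝ) * q k - 1 ≤ (rr q R k : ℝ) := by
  rw [rr_cast q hq0]
  have h1 : (R:ℝ) * ∑ j ∈ Finset.range (k.val+1), qe q j < (FF q R (k.val+1) : ℝ) + 1 :=
    Nat.lt_floor_add_one _
  have h2 : (FF q R k.val : ℝ) ≤ (R:ℝ) * ∑ j ∈ Finset.range k.val, qe q j :=
    Nat.floor_le (mul_nonneg (by positivity) (S_nonneg q hq0 _))
  have h3 := S_succ q k
  nlinarith [h3]

private lemma rr_sum (q : Fin K → ℝ) (hq0 : ∀ k, 0 ≤ q k) (T : ℕ)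
    (hsum : ∑ k, q k = (T:ℝ)) (R : ℕ) :
    ∑ k, rr q R k = R * T := by
  have h1 : ∑ k : Fin K, rr q R k
      = ∑ i ∈ Finset.range K, (FF q R (i+1) - FF q R i) := by
    rw [← Fin.sum_univ_eq_sum_range (fun i => FF q R (i+1) - FF q R i) K]
    rfl
  rw [h1, Finset.sum_range_tsub (FF_mono q hq0 R)]
  have hSK : ∑ j ∈ Finset.range K, qe q j = (T:ℝ) := by
    rw [← Fin.sum_univ_eq_sum_range (qe q) K, ← hsum]
    apply Finset.sum_congr rfl
    intro k _
    unfold qe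
    rw [dif_pos k.isLt]
  have hK : FF q R K = R * T := by
    unfold FF
    rw [hSK]
    rw [show (R:ℝ) * (T:ℝ) = ((R*T : ℕ) : ℝ) by push_cast; ring, Nat.floor_natCast]
  have h0 : FF q R 0 = 0 := by
    unfold FF
    simp
  rw [hK, h0]
  omega

end roundlem


noncomputable def ent : ℝ → ℝ := fun x => -(x * Real.log x + (1-x) * Real.log (1-x))

theorem stmt_14 (K : ℕ) (hK : 0 < K) (T : ℕ) (hT0 : 0 < T) (hTK : T < K)
    (a : Fin K → ℝ) (τ : ℝ)
    (hτ : ∑ k : Fin K, Real.exp (a k + τ) / (1 + Real.exp (a k + τ)) = (T : ℝ)) :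
    Filter.Tendsto (fun R : ℕ =>
        (1 / (R : ℝ)) * Real.log
          (∑ r ∈ (Fintype.piFinset fun _ : Fin K => Finset.range (R + 1)).filter
              (fun r => ∑ k, r k = R * T),
            (∏ k : Fin K, (R.choose (r k) : ℝ)) *
              Real.exp (∑ k : Fin K, (r k : ℝ) * a k)))
      Filter.atTop
      (nhds (-(τ * T) + ∑ k : Fin K, Real.log (1 + Real.exp (a k + τ)))) := by
  classical
  set p : Fin K → ℝ := fun k => Real.exp (a k + τ) / (1 + Real.exp (a k + τ)) with hpdef
  have he : ∀ k, (0:ℝ) < 1 + Real.exp (a k + τ) := fun k => by positivity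
  have hp0 : ∀ k, 0 < p k := fun k => by rw [hpdef]; positivity
  have hp1 : ∀ k, p k < 1 := fun k => by
    rw [hpdef]
    exact (div_lt_one (he k)).2 (lt_one_add _)
  have hpsum : ∑ k, p k = (T:ℝ) := by simp only [hpdef]; exact hτ
  have hq0 : ∀ k, 0 ≤ p k := fun k => (hp0 k).le
  set f : ℕ → ℝ := fun R : ℕ =>
      ∑ r ∈ (Fintype.piFinset fun _ : Fin K => Finset.range (R + 1)).filter
          (fun r => ∑ k, r k = R * T),
        (∏ k : Fin K, (R.choose (r k) : ℝ)) *
          Real.exp (∑ k : Fin K, (r k : ℝ) * a k) with hfdef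
  set L : ℝ := -(τ * T) + ∑ k : Fin K, Real.log (1 + Real.exp (a k + τ)) with hLdef
  -- membership of the rounded profile
  have hrange : ∀ R : ℕ, 1 ≤ R → ∀ k, rr p R k ∈ Finset.range (R+1) := by
    intro R hR k
    rw [Finset.mem_range]
    have hR0 : (0:ℝ) < R := by exact_mod_cast hR
    have h1 : (rr p R k : ℝ) < (R:ℝ) + 1 := by
      have := rr_ub p hq0 R k
      nlinarith [hp1 k]
    exact_mod_cast h1
  have hmem : ∀ R : ℕ, 1 ≤ R →
      rr p R ∈ (Fintype.piFinset fun _ : Fin K => Finset.range (R + 1)).filter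
          (fun r => ∑ k, r k = R * T) := by
    intro R hR
    rw [Finset.mem_filter]
    exact ⟨Fintype.mem_piFinset.2 (hrange R hR), rr_sum p hq0 T hpsum R⟩
  have htermpos : ∀ R : ℕ, ∀ r' ∈ (Fintype.piFinset fun _ : Fin K => Finset.range (R + 1)).filter
          (fun r => ∑ k, r k = R * T),
      (0:ℝ) < (∏ k : Fin K, (R.choose (r' k) : ℝ)) * Real.exp (∑ k : Fin K, (r' k : ℝ) * a k) := by
    intro R r' hr'
    apply mul_pos _ (Real.exp_pos _)
    apply Finset.prod_pos
    intro k _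
    have : r' k ∈ Finset.range (R+1) :=
      Fintype.mem_piFinset.1 (Finset.mem_filter.1 hr').1 k
    rw [Finset.mem_range] at this
    exact_mod_cast Nat.choose_pos (by omega)
  have hfpos : ∀ R : ℕ, 1 ≤ R → 0 < f R := by
    intro R hR
    exact Finset.sum_pos (htermpos R) ⟨rr p R, hmem R hR⟩
  -- upper bound
  have hupper : ∀ᶠ R : ℕ in atTop, (1/(R:ℝ)) * Real.log (f R) ≤ L := by
    filter_upwards [eventually_ge_atTop 1] with R hR
    have hR0 : (0:ℝ) < R := by exact_mod_cast hR
    have hkey : f R ≤ Real.exp (-(τ * ((R:ℝ)*(T:ℝ)))) * ∏ k, (1 + Real.exp (a k + τ))^R := by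
      have hstep1 : f R = Real.exp (-(τ * ((R:ℝ)*(T:ℝ)))) *
          ∑ r' ∈ (Fintype.piFinset fun _ : Fin K => Finset.range (R + 1)).filter
              (fun r => ∑ k, r k = R * T),
            (∏ k : Fin K, (R.choose (r' k) : ℝ)) *
              Real.exp (∑ k : Fin K, (r' k : ℝ) * (a k + τ)) := by
        rw [hfdef, Finset.mul_sum]
        apply Finset.sum_congr rfl
        intro r' hr'
        have hs : ∑ k, r' k = R*T := (Finset.mem_filter.1 hr').2
        have hsR : (∑ k, (r' k:ℝ)) = (R:ℝ)*T := by
          have := congrArg (fun n : ℕ => (n:ℝ)) hs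
          push_cast at this
          exact this
        have h2 : ∑ k, (r' k:ℝ) * (a k + τ) = (∑ k, (r' k:ℝ) * a k) + τ * ((R:ℝ)*T) := by
          simp_rw [mul_add]
          rw [Finset.sum_add_distrib, ← Finset.sum_mul, hsR]
          ring
        rw [h2, Real.exp_add, Real.exp_neg]
        field_simp
      have hstep2 : ∑ r' ∈ (Fintype.piFinset fun _ : Fin K => Finset.range (R + 1)).filter
              (fun r => ∑ k, r k = R * T),
            (∏ k : Fin K, (R.choose (r' k) : ℝ)) * Real.exp (∑ k : Fin K, (r' k : ℝ) * (a k + τ))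
          ≤ ∑ r' ∈ (Fintype.piFinset fun _ : Fin K => Finset.range (R + 1)),
            (∏ k : Fin K, (R.choose (r' k) : ℝ)) * Real.exp (∑ k : Fin K, (r' k : ℝ) * (a k + τ)) :=
        Finset.sum_le_sum_of_subset_of_nonneg (Finset.filter_subset _ _)
          (fun r' _ _ => by positivity)
      have hstep3 : ∑ r' ∈ (Fintype.piFinset fun _ : Fin K => Finset.range (R + 1)),
            (∏ k : Fin K, (R.choose (r' k) : ℝ)) * Real.exp (∑ k : Fin K, (r' k : ℝ) * (a k + τ))
          = ∏ k, (1 + Real.exp (a k + τ))^R := by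
        have hswap : ∀ r' : Fin K → ℕ,
            (∏ k : Fin K, (R.choose (r' k) : ℝ)) * Real.exp (∑ k : Fin K, (r' k : ℝ) * (a k + τ))
              = ∏ k : Fin K, ((R.choose (r' k) : ℝ) * Real.exp ((r' k : ℝ) * (a k + τ))) := by
          intro r'
          rw [Real.exp_sum, ← Finset.prod_mul_distrib]
        rw [Finset.sum_congr rfl (fun r' _ => hswap r'),
          ← Finset.prod_univ_sum (fun _ : Fin K => Finset.range (R+1))
            (fun i j => (R.choose j : ℝ) * Real.exp ((j:ℝ) * (a i + τ)))]
        apply Finset.prod_congr rfl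
        intro k _
        rw [add_comm (1:ℝ), add_pow]
        apply Finset.sum_congr rfl
        intro j hj
        rw [Real.exp_nat_mul, one_pow]
        ring
      calc f R = Real.exp (-(τ * ((R:ℝ)*(T:ℝ)))) * _ := hstep1
        _ ≤ Real.exp (-(τ * ((R:ℝ)*(T:ℝ)))) * ∏ k, (1 + Real.exp (a k + τ))^R := by
            apply mul_le_mul_of_nonneg_left _ (Real.exp_nonneg _)
            exact hstep2.trans_eq hstep3
    have hprodpos : (0:ℝ) < ∏ k, (1 + Real.exp (a k + τ))^R := by positivity
    have hlog := Real.log_le_log (hfpos R hR) hkey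
    rw [Real.log_mul (Real.exp_ne_zero _) (ne_of_gt hprodpos), Real.log_exp,
        Real.log_prod (fun k _ => by positivity)] at hlog
    simp_rw [Real.log_pow] at hlog
    have hsum : ∑ k : Fin K, (R:ℕ) * Real.log (1 + Real.exp (a k + τ))
        = (R:ℝ) * ∑ k, Real.log (1 + Real.exp (a k + τ)) := by
      rw [Finset.mul_sum]
      try push_cast
      try ring
    rw [hsum] at hlog
    have h3 := mul_le_mul_of_nonneg_left hlog (le_of_lt (one_div_pos.2 hR0))
    calc (1/(R:ℝ)) * Real.log (f R) ≤ (1/(R:ℝ)) * (-(τ * ((R:ℝ)*(T:ℝ)))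
          + (R:ℝ) * ∑ k, Real.log (1 + Real.exp (a k + τ))) := h3
      _ = L := by
          rw [hLdef]
          field_simp
          try ring
  -- convergence of profile frequencies
  have hxk : ∀ k, Tendsto (fun R : ℕ => (rr p R k : ℝ)/R) atTop (𝓝 (p k)) := by
    intro k
    rw [← tendsto_sub_nhds_zero_iff]
    apply squeeze_zero_norm' (a := fun R : ℕ => 1/(R:ℝ)) _ tendsto_one_div_atTop_nhds_zero_nat
    filter_upwards [eventually_ge_atTop 1] with R hR
    have hR0 : (0:ℝ) < R := by exact_mod_cast hR
    have heq : (rr p R k:ℝ)/R - p k = ((rr p R k:ℝ) - R * p k)/R := by field_simp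
    rw [Real.norm_eq_abs, heq, abs_div, abs_of_pos hR0]
    gcongr
    exact abs_le.2 ⟨by linarith [rr_lb p hq0 R k], by linarith [rr_ub p hq0 R k]⟩
  -- eventual interior condition
  have hall : ∀ᶠ R : ℕ in atTop, 1 ≤ R ∧ ∀ k, 0 < rr p R k ∧ rr p R k < R := by
    apply (eventually_ge_atTop 1).and
    rw [Filter.eventually_all]
    intro k
    filter_upwards [(hxk k).eventually (Ioo_mem_nhds (hp0 k) (hp1 k)),
      eventually_ge_atTop 1] with R hx hR
    have hR0 : (0:ℝ) < R := by exact_mod_cast hR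
    constructor
    · by_contra h
      have h0 : rr p R k = 0 := by omega
      rw [h0] at hx
      simpa using hx.1
    · have := (div_lt_one hR0).1 hx.2
      exact_mod_cast this
  -- the lower comparison function
  set g : ℕ → ℝ := fun R =>
    (∑ k, (ent ((rr p R k : ℝ)/R) + ((rr p R k : ℝ)/R) * a k))
      - (K:ℝ) * Real.log ((R:ℝ)+1) / R with hgdef
  have hlow : ∀ᶠ R : ℕ in atTop, g R ≤ (1/(R:ℝ)) * Real.log (f R) := by
    filter_upwards [hall] with R hRall
    obtain ⟨hR1, hk⟩ := hRall
    have hR0 : (0:ℝ) < R := by exact_mod_cast hR1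
    have hstep1 : (∑ k, Real.log (R.choose (rr p R k))) + ∑ k, (rr p R k:ℝ) * a k
        ≤ Real.log (f R) := by
      rw [Real.le_log_iff_exp_le (hfpos R hR1)]
      have hterm : Real.exp ((∑ k, Real.log (R.choose (rr p R k))) + ∑ k, (rr p R k:ℝ)*a k)
          = (∏ k, (R.choose (rr p R k):ℝ)) * Real.exp (∑ k, (rr p R k:ℝ)*a k) := by
        rw [Real.exp_add, Real.exp_sum]
        congr 1
        apply Finset.prod_congr rfl
        intro k _
        exact Real.exp_log (by exact_mod_cast Nat.choose_pos (le_of_lt (hk k).2))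
      rw [hterm, hfdef]
      exact Finset.single_le_sum (fun r' hr' => (htermpos R r' hr').le) (hmem R hR1)
    have hstep2 : ∀ k, ent ((rr p R k:ℝ)/R) - Real.log ((R:ℝ)+1)/R
        ≤ (1/(R:ℝ)) * Real.log (R.choose (rr p R k)) := by
      intro k
      have h1 := log_choose_ge R (rr p R k) (hk k).1 (hk k).2
      have hr0 : (0:ℝ) < rr p R k := by exact_mod_cast (hk k).1
      have hrR : (rr p R k:ℝ) < R := by exact_mod_cast (hk k).2
      have hent : (R:ℝ) * ent ((rr p R k:ℝ)/R)
          = (R:ℝ)*Real.log R - (rr p R k:ℝ)*Real.log (rr p R k)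
            - ((R:ℝ) - rr p R k)*Real.log ((R:ℝ) - rr p R k) := by
        unfold ent
        have e1 : Real.log ((rr p R k:ℝ)/R) = Real.log (rr p R k) - Real.log R :=
          Real.log_div (ne_of_gt hr0) (ne_of_gt hR0)
        have e2 : 1 - (rr p R k:ℝ)/R = ((R:ℝ) - rr p R k)/R := by field_simp
        have e3 : Real.log (((R:ℝ) - rr p R k)/R)
            = Real.log ((R:ℝ) - rr p R k) - Real.log R :=
          Real.log_div (by linarith) (ne_of_gt hR0)
        rw [e2, e1, e3]
        field_simp
        ring
      have h2 : (R:ℝ) * ent ((rr p R k:ℝ)/R) - Real.log ((R:ℝ)+1)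
          ≤ Real.log (R.choose (rr p R k)) := by
        rw [hent]
        linarith
      have h3 := mul_le_mul_of_nonneg_left h2 (le_of_lt (one_div_pos.2 hR0))
      calc ent ((rr p R k:ℝ)/R) - Real.log ((R:ℝ)+1)/R
          = (1/(R:ℝ)) * ((R:ℝ) * ent ((rr p R k:ℝ)/R) - Real.log ((R:ℝ)+1)) := by
            field_simp
        _ ≤ (1/(R:ℝ)) * Real.log (R.choose (rr p R k)) := h3
    have hper : ∀ k, ent ((rr p R k:ℝ)/R) + ((rr p R k:ℝ)/R) * a k
        ≤ (1/(R:ℝ)) * Real.log (R.choose (rr p R k)) + (1/(R:ℝ))*((rr p R k:ℝ) * a k)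
          + Real.log ((R:ℝ)+1)/R := by
      intro k
      have h4 := hstep2 k
      have hax : ((rr p R k:ℝ)/R) * a k = (1/(R:ℝ))*((rr p R k:ℝ) * a k) := by ring
      linarith
    have hsumle := Finset.sum_le_sum (fun k (_ : k ∈ Finset.univ) => hper k)
    have hRHS : ∑ k : Fin K, ((1/(R:ℝ)) * Real.log (R.choose (rr p R k))
          + (1/(R:ℝ))*((rr p R k:ℝ) * a k) + Real.log ((R:ℝ)+1)/R)
        = (1/(R:ℝ)) * ((∑ k, Real.log (R.choose (rr p R k))) + ∑ k, (rr p R k:ℝ)*a k)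
          + (K:ℝ) * Real.log ((R:ℝ)+1) / R := by
      rw [Finset.sum_add_distrib, Finset.sum_add_distrib, ← Finset.mul_sum, ← Finset.mul_sum,
        Finset.sum_const, Finset.card_univ, Fintype.card_fin, nsmul_eq_mul]
      ring
    rw [hRHS] at hsumle
    have hfinal : g R ≤ (1/(R:ℝ)) * ((∑ k, Real.log (R.choose (rr p R k)))
        + ∑ k, (rr p R k:ℝ)*a k) := by
      rw [hgdef]
      simp only
      linarith
    calc g R ≤ _ := hfinal
      _ ≤ (1/(R:ℝ)) * Real.log (f R) :=
          mul_le_mul_of_nonneg_left hstep1 (le_of_lt (one_div_pos.2 hR0))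
  have hloglim : Tendsto (fun R : ℕ => Real.log ((R:ℝ)+1)/R) atTop (𝓝 0) := by
    have l1 : Tendsto (fun x:ℝ => Real.log x / x) atTop (𝓝 0) :=
      Real.isLittleO_log_id_atTop.tendsto_div_nhds_zero
    have l2 : Tendsto (fun R : ℕ => ((R:ℝ)+1)) atTop atTop :=
      tendsto_atTop_add_const_right _ 1 tendsto_natCast_atTop_atTop
    have l3 : Tendsto (fun R : ℕ => Real.log ((R:ℝ)+1)/((R:ℝ)+1)) atTop (𝓝 0) := l1.comp l2
    have l4 : Tendsto (fun R : ℕ => ((R:ℝ)+1)/R) atTop (𝓝 1) := by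
      have h5 : Tendsto (fun R : ℕ => 1 + 1/(R:ℝ)) atTop (𝓝 (1+0)) :=
        tendsto_const_nhds.add tendsto_one_div_atTop_nhds_zero_nat
      rw [add_zero] at h5
      apply Tendsto.congr' _ h5
      filter_upwards [eventually_ge_atTop 1] with R hR
      have hR0 : (0:ℝ) < R := by exact_mod_cast hR
      field_simp
    have l5 : Tendsto (fun R : ℕ => (Real.log ((R:ℝ)+1)/((R:ℝ)+1)) * (((R:ℝ)+1)/R))
        atTop (𝓝 (0*1)) := l3.mul l4
    rw [zero_mul] at l5
    apply Tendsto.congr' _ l5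
    filter_upwards [eventually_ge_atTop 1] with R hR
    have hR0 : (0:ℝ) < R := by exact_mod_cast hR
    field_simp
  have hgL : Tendsto g atTop (𝓝 L) := by
    have hconst : Tendsto (fun R : ℕ => (K:ℝ) * Real.log ((R:ℝ)+1)/R) atTop (𝓝 0) := by
      have h6 := hloglim.const_mul (K:ℝ)
      rw [mul_zero] at h6
      apply Tendsto.congr _ h6
      intro R
      rw [mul_div_assoc]
    have hsumlim : Tendsto (fun R : ℕ => ∑ k, (ent ((rr p R k:ℝ)/R) + ((rr p R k:ℝ)/R)*a k))
        atTop (𝓝 (∑ k, (ent (p k) + p k * a k))) := by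
      apply tendsto_finset_sum
      intro k _
      apply Tendsto.add
      · have hc : ContinuousAt ent (p k) := by
          have hne1 : p k ≠ 0 := ne_of_gt (hp0 k)
          have hne2 : (1:ℝ) - p k ≠ 0 := by have := hp1 k; intro h; linarith [sub_eq_zero.1 h]
          apply ContinuousAt.neg
          apply ContinuousAt.add
          · exact continuousAt_id.mul (Real.continuousAt_log hne1)
          · exact (continuousAt_const.sub continuousAt_id).mul
              ((Real.continuousAt_log hne2).comp (continuousAt_const.sub continuousAt_id))
        exact hc.tendsto.comp (hxk k)
      · exact (hxk k).mul_const (a k)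
    have hval : ∑ k, (ent (p k) + p k * a k) = L := by
      have hper : ∀ k, ent (p k) + p k * a k
          = Real.log (1 + Real.exp (a k + τ)) - τ * p k := by
        intro k
        have he' := he k
        have hlog1 : Real.log (p k) = (a k + τ) - Real.log (1 + Real.exp (a k + τ)) := by
          rw [hpdef]
          simp only
          rw [Real.log_div (ne_of_gt (Real.exp_pos _)) (ne_of_gt he'), Real.log_exp]
        have h1p : 1 - p k = 1/(1 + Real.exp (a k + τ)) := by
          rw [hpdef]
          simp only
          field_simp
          ring
        have hlog2 : Real.log (1 - p k) = - Real.log (1 + Real.exp (a k + τ)) := by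
          rw [h1p, one_div, Real.log_inv]
        unfold ent
        rw [hlog1, hlog2]
        ring
      rw [Finset.sum_congr rfl (fun k (_ : k ∈ Finset.univ) => hper k),
        Finset.sum_sub_distrib, ← Finset.mul_sum, hpsum, hLdef]
      ring
    have h7 := hsumlim.sub hconst
    rw [sub_zero, hval] at h7
    exact h7
  exact tendsto_of_tendsto_of_tendsto_of_le_of_le' hgL tendsto_const_nhds hlow hupper
end

section
/- If a sequence of finite-valued concave functions M_R : ℝ^P → ℝ converges pointwise to a function M which has a unique maximizer β*, and β_R is a maximizer of M_R for each R, then β_R → β* as R → ∞. -/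
open Metric Set Filter

-- coordinate bound
lemma coord_abs_le_norm {P : ℕ} (x : EuclideanSpace ℝ (Fin P)) (i : Fin P) : |x i| ≤ ‖x‖ := by
  rw [EuclideanSpace.norm_eq, ← Real.sqrt_sq_eq_abs]
  apply Real.sqrt_le_sqrt
  calc x i ^ 2 = ‖x i‖ ^ 2 := by rw [Real.norm_eq_abs, sq_abs]
  _ ≤ ∑ j, ‖x j‖ ^ 2 := Finset.single_le_sum (f := fun j => ‖x j‖ ^ 2)
      (fun j _ => by positivity) (Finset.mem_univ i)

-- the finite "vertex set" of a cube around x₀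
def cubeVerts {P : ℕ} (x₀ : EuclideanSpace ℝ (Fin P)) (r : ℝ) : Set (EuclideanSpace ℝ (Fin P)) :=
  (fun y => x₀ + y) '' (WithLp.toLp 2 '' (Set.univ.pi fun _ : Fin P => ({-r, r} : Set ℝ)) :
    Set (EuclideanSpace ℝ (Fin P)))

lemma cubeVerts_finite {P : ℕ} (x₀ : EuclideanSpace ℝ (Fin P)) (r : ℝ) :
    (cubeVerts x₀ r).Finite := by
  apply Set.Finite.image
  exact (Set.Finite.pi fun i => (Set.finite_singleton r).insert (-r)).image _

-- concave f bounded below on ball by min over cube vertices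
lemma concave_lb {P : ℕ} (f : EuclideanSpace ℝ (Fin P) → ℝ)
    (hf : ConcaveOn ℝ Set.univ f) (x₀ : EuclideanSpace ℝ (Fin P)) (r m : ℝ)
    (hm : ∀ v ∈ cubeVerts x₀ r, m ≤ f v) :
    ∀ x ∈ closedBall x₀ r, m ≤ f x := by
  intro x hx
  have hg : ConcaveOn ℝ Set.univ (fun y => f (x₀ + y)) := by
    refine ⟨convex_univ, fun a _ b _ s t hs ht hst => ?_⟩
    have h := hf.2 (mem_univ (x₀ + a)) (mem_univ (x₀ + b)) hs ht hst
    have e : s • (x₀ + a) + t • (x₀ + b) = x₀ + (s • a + t • b) := by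
      rw [smul_add, smul_add, add_add_add_comm, ← add_smul, hst, one_smul]
    rw [e] at h
    exact h
  have hmem : (x - x₀) ∈ convexHull ℝ
      (WithLp.toLp 2 '' (Set.univ.pi fun _ : Fin P => ({-r, r} : Set ℝ)) : Set (EuclideanSpace ℝ (Fin P))) := by
    suffices h0 : WithLp.ofLp (x - x₀) ∈ convexHull ℝ (Set.univ.pi fun _ : Fin P => ({-r, r} : Set ℝ)) by
      have h := Set.mem_image_of_mem (WithLp.linearEquiv 2 ℝ (Fin P → ℝ)).symm.toLinearMap h0
      rw [LinearMap.image_convexHull] at h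
      simpa using h
    apply mem_convexHull_pi
    intro i _
    rw [convexHull_pair]
    have habs : |(x - x₀) i| ≤ r := by
      refine (coord_abs_le_norm _ i).trans ?_
      rw [← dist_eq_norm]
      exact mem_closedBall.mp hx
    have hr : -r ≤ r := by
      have := (abs_nonneg ((x - x₀) i)).trans habs
      linarith
    rw [segment_eq_Icc hr]
    exact abs_le.mp habs
  obtain ⟨v, hv, hle⟩ := hg.exists_le_of_mem_convexHull (Set.subset_univ _) hmem
  have : f (x₀ + (x - x₀)) = f x := by congr 1; abel
  calc m ≤ f (x₀ + v) := hm _ ⟨v, hv, rfl⟩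
  _ ≤ f (x₀ + (x - x₀)) := hle
  _ = f x := this

-- concave f bounded below on ball and at center above gives abs bound
lemma concave_abs_bound {P : ℕ} (f : EuclideanSpace ℝ (Fin P) → ℝ)
    (hf : ConcaveOn ℝ Set.univ f) (x₀ : EuclideanSpace ℝ (Fin P)) (r m c : ℝ)
    (hm : ∀ x ∈ closedBall x₀ r, m ≤ f x) (hc : f x₀ ≤ c) :
    ∀ x ∈ closedBall x₀ r, |f x| ≤ |m| + |2 * c - m| := by
  intro x hx
  have hy : x₀ + (x₀ - x) ∈ closedBall x₀ r := by
    rw [mem_closedBall] at hx ⊢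
    rw [dist_eq_norm] at hx ⊢
    have : x₀ + (x₀ - x) - x₀ = -(x - x₀) := by abel
    rw [this, norm_neg]
    exact hx
  have hmid : (1/2 : ℝ) • x + (1/2 : ℝ) • (x₀ + (x₀ - x)) = x₀ := by module
  have hcon := hf.2 (mem_univ x) (mem_univ (x₀ + (x₀ - x)))
    (by norm_num : (0:ℝ) ≤ 1/2) (by norm_num : (0:ℝ) ≤ 1/2) (by norm_num)
  rw [hmid] at hcon
  simp only [smul_eq_mul] at hcon
  have hylb := hm _ hy
  have hub : f x ≤ 2 * c - m := by linarith
  have hlb := hm x hx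
  rw [abs_le]
  constructor
  · have h1 := neg_abs_le m; have h2 := abs_nonneg (2 * c - m); linarith
  · have h1 := le_abs_self (2 * c - m); have h2 := abs_nonneg m; linarith

theorem stmt_15 (P : ℕ) (hP : 0 < P)
    (M : ℕ → (EuclideanSpace ℝ (Fin P)) → ℝ)
    (hconc : ∀ R, ConcaveOn ℝ Set.univ (M R))
    (Mlim : (EuclideanSpace ℝ (Fin P)) → ℝ)
    (hpt : ∀ β, Filter.Tendsto (fun R => M R β) Filter.atTop (nhds (Mlim β)))
    (βstar : EuclideanSpace ℝ (Fin P))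
    (hmax : ∀ β, Mlim β ≤ Mlim βstar)
    (huniq : ∀ β, (∀ γ, Mlim γ ≤ Mlim β) → β = βstar)
    (βR : ℕ → EuclideanSpace ℝ (Fin P))
    (hβR : ∀ R β, M R β ≤ M R (βR R)) :
    Filter.Tendsto βR Filter.atTop (nhds βstar) := by
  have key : ∀ ε : ℝ, 0 < ε → ∀ᶠ R in atTop, dist (βR R) βstar ≤ ε := by
    intro ε hε
    set c := Mlim βstar with hc
    have hMc : ConcaveOn ℝ Set.univ Mlim := by
      refine ⟨convex_univ, fun x _ y _ a b ha hb hab => ?_⟩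
      refine le_of_tendsto_of_tendsto' (((hpt x).const_mul a).add ((hpt y).const_mul b))
        (hpt _) (fun R => ?_)
      simpa [smul_eq_mul] using (hconc R).2 (mem_univ x) (mem_univ y) ha hb hab
    set T := cubeVerts βstar (3*ε) with hT
    have hTfin : T.Finite := cubeVerts_finite βstar (3*ε)
    obtain ⟨m, hmlb⟩ : ∃ m, ∀ v ∈ T, m ≤ Mlim v := by
      obtain ⟨m, hm⟩ := (hTfin.image Mlim).bddBelow
      exact ⟨m, fun v hv => hm (Set.mem_image_of_mem _ hv)⟩
    set K := |m - 1| + |2 * (c + 1) - (m - 1)| + 1 with hK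
    have hKpos : 0 < K := by positivity
    have habs : ∀ f : EuclideanSpace ℝ (Fin P) → ℝ, ConcaveOn ℝ Set.univ f →
        (∀ v ∈ T, m - 1 ≤ f v) → f βstar ≤ c + 1 →
        ∀ a, dist a βstar < 3*ε → |f a| ≤ K := by
      intro f hf h1 h2 a ha
      have hlb := concave_lb f hf βstar (3*ε) (m-1) h1
      have := concave_abs_bound f hf βstar (3*ε) (m-1) (c+1) hlb h2 a
        (ball_subset_closedBall (mem_ball.mpr ha))
      linarith
    set C : ℝ := 2 * K / ε with hC
    have hCpos : 0 < C := by positivity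
    have hlip : ∀ f : EuclideanSpace ℝ (Fin P) → ℝ, ConcaveOn ℝ Set.univ f →
        (∀ a, dist a βstar < 3*ε → |f a| ≤ K) →
        LipschitzOnWith (Real.toNNReal C) f (ball βstar (2*ε)) := by
      intro f hf hb
      have h := (hf.subset (subset_univ _) (convex_ball βstar (3*ε))).lipschitzOnWith_of_abs_le
        hε hb
      have h2 : 3*ε - ε = 2*ε := by ring
      rwa [h2] at h
    have hMlimabs : ∀ a, dist a βstar < 3*ε → |Mlim a| ≤ K :=
      habs Mlim hMc (fun v hv => by linarith [hmlb v hv]) (by linarith)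
    have hMlimlip := hlip Mlim hMc hMlimabs
    set S := sphere βstar ε with hS
    have hSsub : S ⊆ ball βstar (2*ε) := fun y hy => by
      rw [hS, mem_sphere] at hy; rw [mem_ball, hy]; linarith
    have hSne : S.Nonempty := by
      refine ⟨βstar + ε • EuclideanSpace.single (⟨0, hP⟩ : Fin P) (1:ℝ), ?_⟩
      rw [hS, mem_sphere, dist_eq_norm]
      have h4 : βstar + ε • EuclideanSpace.single (⟨0, hP⟩ : Fin P) (1:ℝ) - βstar
          = ε • EuclideanSpace.single (⟨0, hP⟩ : Fin P) (1:ℝ) := by abel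
      rw [h4, norm_smul, EuclideanSpace.norm_single, norm_one, Real.norm_eq_abs, abs_of_pos hε, mul_one]
    obtain ⟨β₀, hβ₀S, hβ₀max⟩ := (isCompact_sphere βstar ε).exists_isMaxOn hSne
      (hMlimlip.continuousOn.mono hSsub)
    have hβ₀lt : Mlim β₀ < c := by
      rcases lt_or_eq_of_le (hmax β₀) with h | h
      · exact h
      · exfalso
        have hb0 : β₀ = βstar := huniq β₀ (fun γ => h ▸ hmax γ)
        rw [hb0, mem_sphere, dist_self] at hβ₀S
        linarith
    set δ := (c - Mlim β₀)/4 with hδ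
    have hδpos : 0 < δ := by rw [hδ]; linarith
    have hSbound : ∀ y ∈ S, Mlim y ≤ c - 4*δ := fun y hy => by
      have h5 := isMaxOn_iff.mp hβ₀max y hy
      rw [hδ]; linarith
    obtain ⟨N, hNsub, hNfin, hNcover⟩ := finite_approx_of_totallyBounded
      (isCompact_sphere βstar ε).totallyBounded (δ / C) (by positivity)
    have ev1 : ∀ᶠ R in atTop, ∀ v ∈ T, m - 1 ≤ M R v := by
      rw [hTfin.eventually_all]
      intro v hv
      exact (hpt v).eventually (eventually_ge_nhds (by linarith [hmlb v hv]))
    have ev2 : ∀ᶠ R in atTop, ∀ p ∈ N, |M R p - Mlim p| < δ := by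
      rw [hNfin.eventually_all]
      intro p hp
      have h6 := Metric.tendsto_nhds.mp (hpt p) δ hδpos
      simpa [Real.dist_eq] using h6
    have ev3 : ∀ᶠ R in atTop, |M R βstar - c| < min δ 1 := by
      have h7 := Metric.tendsto_nhds.mp (hpt βstar) (min δ 1) (lt_min hδpos one_pos)
      simpa [Real.dist_eq] using h7
    filter_upwards [ev1, ev2, ev3] with R h1 h2 h3
    have h3' := abs_lt.mp h3
    have h3a : M R βstar ≤ c + 1 := by
      have := min_le_right δ 1; linarith [h3'.2]
    have h3b : c - δ < M R βstar := by
      have := min_le_left δ 1; linarith [h3'.1]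
    have hfabs := habs (M R) (hconc R) h1 h3a
    have hflip := hlip (M R) (hconc R) hfabs
    have hsph : ∀ y ∈ S, M R y < M R βstar := by
      intro y hy
      obtain ⟨p, hpN, hyp⟩ : ∃ p ∈ N, y ∈ ball p (δ / C) := by
        simpa using hNcover hy
      have hd : dist (M R y) (M R p) ≤ C * dist y p := by
        have h8 := hflip.dist_le_mul y (hSsub hy) p (hSsub (hNsub hpN))
        rwa [Real.coe_toNNReal C hCpos.le] at h8
      have hyp' : dist y p < δ / C := mem_ball.mp hyp
      have hdd : dist (M R y) (M R p) ≤ δ := by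
        calc dist (M R y) (M R p) ≤ C * dist y p := hd
        _ ≤ C * (δ / C) := mul_le_mul_of_nonneg_left hyp'.le hCpos.le
        _ = δ := by field_simp
      rw [Real.dist_eq] at hdd
      have habs1 := abs_le.mp hdd
      have habs2 := abs_lt.mp (h2 p hpN)
      have hMp := hSbound p (hNsub hpN)
      linarith [habs1.2, habs2.2]
    by_contra hcon
    rw [not_le] at hcon
    set d := dist (βR R) βstar with hd
    have hdpos : 0 < d := lt_trans hε hcon
    set t := ε / d with ht
    have ht0 : 0 < t := by positivity
    have ht1 : t < 1 := (div_lt_one hdpos).mpr hcon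
    set x := βstar + t • (βR R - βstar) with hx
    have hxS : x ∈ S := by
      rw [hS, mem_sphere, dist_eq_norm]
      have h4 : x - βstar = t • (βR R - βstar) := by rw [hx]; abel
      rw [h4, norm_smul, Real.norm_eq_abs, abs_of_pos ht0, ← dist_eq_norm, ← hd, ht]
      field_simp
    have hcomb := (hconc R).2 (mem_univ βstar) (mem_univ (βR R))
      (by linarith : (0:ℝ) ≤ 1 - t) ht0.le (by ring)
    have hxeq : (1 - t) • βstar + t • βR R = x := by rw [hx]; module
    rw [hxeq] at hcomb
    simp only [smul_eq_mul] at hcomb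
    have hb := hβR R βstar
    have hlt := hsph x hxS
    nlinarith [mul_nonneg ht0.le (sub_nonneg.mpr hb)]
  rw [Metric.tendsto_atTop]
  intro ε hε
  have hk := key (ε/2) (by linarith)
  rw [eventually_atTop] at hk
  obtain ⟨Nn, hNn⟩ := hk
  exact ⟨Nn, fun n hn => lt_of_le_of_lt (hNn n hn) (by linarith)⟩
end

section
/- For a single cluster of size K = 2 (matched pair) with covariate dimension P = 1, covariates X_1 = 1, X_2 = 0, and outcome sum T = 1, the conditional log-likelihood term log(e^{β·1} + e^{β·0}) satisfies: the conditional score equation ∑_k Y_k X_k = e^{β}/(1 + e^{β}) together with the ordinary score equation imply that the MLE and CMLE satisfy β̂^o = 2 β̂^c. -/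
/-- Matched-pair design (K = 2, X₁ = 1, X₂ = 0, outcome sum T = 1):
if the cluster intercept `b` is profiled out via the ordinary score equation,
and the ordinary and conditional score equations agree, then β̂ᵒ = 2β̂ᶜ. -/
theorem stmt_17 (βo βc b : ℝ)
    (hprofile : Real.exp (βo + b) / (1 + Real.exp (βo + b)) +
        Real.exp b / (1 + Real.exp b) = 1)
    (hscore : Real.exp (βo + b) / (1 + Real.exp (βo + b)) =
        Real.exp βc / (1 + Real.exp βc)) :
    βo = 2 * βc := by
  have h1 : (0:ℝ) < 1 + Real.exp (βo + b) := by positivity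
  have h2 : (0:ℝ) < 1 + Real.exp b := by positivity
  have h3 : (0:ℝ) < 1 + Real.exp βc := by positivity
  have huv : Real.exp (βo + b) * Real.exp b = 1 := by
    field_simp at hprofile
    nlinarith [hprofile]
  have hb : βo + b + b = 0 := by
    rw [← Real.exp_add] at huv
    rwa [Real.exp_eq_one_iff] at huv
  have hw : Real.exp (βo + b) = Real.exp βc := by
    field_simp at hscore
    nlinarith [hscore]
  have hbc : βo + b = βc := Real.exp_eq_exp.mp hw
  linarith
end
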